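/- arXiv:2403.13549 — 4 statements merged into one kernel-verified Lean document; each statement's English description precedes it below -/
import Mathlib

section
/- For every t > 0 and ε > 0, the symmetric improper integral of x e^{ixt}/(x² + ε²) over ℝ satisfies lim_{R→+∞} ∫_{−R}^{R} x e^{ixt}/(x² + ε²) dx = iπ e^{−εt}. -/
set_option maxHeartbeats 1000000
open MeasureTheory Filter Set intervalIntegral Complex

lemma rect_eq (f : ℂ → ℂ) (R H : ℝ)
    (hd : DifferentiableOn ℂ f (Set.uIcc (-R) R ×ℂ Set.uIcc 0 H)) :
    (∫ x : ℝ in (-R)..R, f x) =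
      (∫ x : ℝ in (-R)..R, f (x + H * Complex.I))
      - Complex.I * (∫ y : ℝ in (0:ℝ)..H, f (R + y * Complex.I))
      + Complex.I * (∫ y : ℝ in (0:ℝ)..H, f (-R + y * Complex.I)) := by
  have h := Complex.integral_boundary_rect_eq_zero_of_differentiableOn f (-(R:ℂ))
    ((R:ℂ) + (H:ℝ) * Complex.I) (by simpa using hd)
  simp only [Complex.add_re, Complex.neg_re, Complex.ofReal_re, Complex.add_im, Complex.neg_im,
    Complex.ofReal_im, Complex.mul_re, Complex.mul_im, Complex.I_re, Complex.I_im,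
    mul_zero, mul_one, zero_mul, sub_zero, zero_sub, zero_add, add_zero, neg_zero,
    Complex.ofReal_zero, smul_eq_mul, neg_neg] at h
  push_cast at h ⊢
  linear_combination h

lemma exp_integral_aux (t R H : ℝ) (ht : 0 < t) (hR : 0 < R) :
    ∫ y : ℝ in (0:ℝ)..H, Real.exp (-(t*y)) / R = (1 - Real.exp (-(t*H))) / (R*t) := by
  have : ∀ y ∈ Set.uIcc (0:ℝ) H, HasDerivAt (fun y : ℝ => -Real.exp (-(t*y)) / (R*t))
      (Real.exp (-(t*y)) / R) y := by
    intro y _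
    have h1 : HasDerivAt (fun y : ℝ => -(t*y)) (-t) y := by
      exact (((hasDerivAt_id y).const_mul t).neg).congr_deriv (by simp)
    have h2 := (Real.hasDerivAt_exp (-(t*y))).comp y h1
    have h3 := (h2.neg).div_const (R*t)
    refine h3.congr_deriv ?_
    field_simp [hR.ne', ht.ne']
  rw [intervalIntegral.integral_eq_sub_of_hasDerivAt this ((Continuous.intervalIntegrable (by fun_prop) _ _))]
  simp
  field_simp
  ring

lemma side_bound (f : ℝ → ℂ) (t R H : ℝ) (ht : 0 < t) (hR : 0 < R) (hH : 0 ≤ H)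
    (hf : ∀ y, ‖f y‖ ≤ Real.exp (-(t*y)) / R) :
    ‖∫ y : ℝ in (0:ℝ)..H, f y‖ ≤ 1 / (R*t) := by
  have h1 : ‖∫ y : ℝ in (0:ℝ)..H, f y‖ ≤ |∫ y : ℝ in (0:ℝ)..H, Real.exp (-(t*y)) / R| :=
    intervalIntegral.norm_integral_le_abs_of_norm_le (Filter.Eventually.of_forall fun y => hf y)
      ((Continuous.intervalIntegrable (by fun_prop) _ _))
  refine h1.trans ?_
  rw [exp_integral_aux t R H ht hR, abs_div]
  have hRt : 0 < R * t := mul_pos hR ht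
  rw [abs_of_pos hRt]
  have he : |1 - Real.exp (-(t*H))| ≤ 1 := by
    have h2 : Real.exp (-(t*H)) ≤ 1 := Real.exp_le_one_iff.mpr (by nlinarith)
    have h3 := Real.exp_pos (-(t*H))
    rw [abs_le]; constructor <;> nlinarith
  gcongr

lemma integral_line_inv (p q : ℂ) (a b : ℝ)
    (h : ∀ y ∈ Set.uIcc a b, p + y * q ∈ Complex.slitPlane) :
    ∫ y : ℝ in a..b, q * (p + y * q)⁻¹ =
      Complex.log (p + b * q) - Complex.log (p + a * q) := by
  refine intervalIntegral.integral_eq_sub_of_hasDerivAt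
    (f := fun y : ℝ => Complex.log (p + y * q)) (fun y hy => ?_) ?_
  · have h1 : HasDerivAt (fun z : ℂ => p + z * q) q (y : ℂ) := by
      simpa using ((hasDerivAt_id ((y : ℂ))).mul_const q).const_add p
    have h2 := (Complex.hasDerivAt_log (h y hy)).comp (y : ℂ) h1
    have h3 := h2.comp_ofReal
    simpa [Function.comp, mul_comm] using h3
  · apply ContinuousOn.intervalIntegrable
    apply ContinuousOn.mul continuousOn_const
    apply ContinuousOn.inv₀
    · fun_prop
    · intro y hy; exact Complex.slitPlane_ne_zero (h y hy)

lemma log_neg_of_im_pos {z : ℂ} (hz : 0 < z.im) :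
    Complex.log (-z) = Complex.log z - Real.pi * Complex.I := by
  apply Complex.ext
  · simp [Complex.log_re]
  · simp [Complex.log_im, Complex.arg_neg_eq_arg_sub_pi_of_im_pos hz]

lemma log_neg_of_im_neg {z : ℂ} (hz : z.im < 0) :
    Complex.log (-z) = Complex.log z + Real.pi * Complex.I := by
  apply Complex.ext
  · simp [Complex.log_re]
  · simp [Complex.log_im, Complex.arg_neg_eq_arg_add_pi_of_im_neg hz]

lemma pole_integral (ε R H : ℝ) (hε : 0 < ε) (hR : 0 < R) (hH : ε < H) :
    (∫ x : ℝ in (-R)..R, ((x : ℂ) - ε * Complex.I)⁻¹)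
      - (∫ x : ℝ in (-R)..R, ((x : ℂ) + H * Complex.I - ε * Complex.I)⁻¹)
      + Complex.I * (∫ y : ℝ in (0:ℝ)..H, ((R : ℂ) + y * Complex.I - ε * Complex.I)⁻¹)
      - Complex.I * (∫ y : ℝ in (0:ℝ)..H, (-(R : ℂ) + y * Complex.I - ε * Complex.I)⁻¹)
      = 2 * Real.pi * Complex.I := by
  have hbot : (∫ x : ℝ in (-R)..R, ((x : ℂ) - ε * Complex.I)⁻¹)
      = Complex.log ((R : ℂ) - ε * Complex.I) - Complex.log (-(R : ℂ) - ε * Complex.I) := by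
    have h := integral_line_inv (-(ε : ℂ) * Complex.I) 1 (-R) R (fun y _ => by
      simp [Complex.mem_slitPlane_iff, hε.ne'])
    rw [show ((-(ε:ℂ)*Complex.I + (R:ℝ)*1)) = (R : ℂ) - ε * Complex.I by push_cast; ring,
      show ((-(ε:ℂ)*Complex.I + ((-R : ℝ):ℂ)*1)) = -(R : ℂ) - ε * Complex.I by push_cast; ring] at h
    rw [← h]
    apply intervalIntegral.integral_congr
    intro x _
    congr 1; push_cast; ring
  have htop : (∫ x : ℝ in (-R)..R, ((x : ℂ) + H * Complex.I - ε * Complex.I)⁻¹)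
      = Complex.log ((R : ℂ) + H * Complex.I - ε * Complex.I)
        - Complex.log (-(R : ℂ) + H * Complex.I - ε * Complex.I) := by
    have h := integral_line_inv ((H : ℂ) * Complex.I - (ε : ℂ) * Complex.I) 1 (-R) R (fun y _ => by
      simp only [Complex.mem_slitPlane_iff]
      right
      simp [sub_ne_zero, hH.ne'])
    rw [show ((H:ℂ)*Complex.I - (ε:ℂ)*Complex.I + (R:ℝ)*1) = (R : ℂ) + H * Complex.I - ε * Complex.I
        by push_cast; ring,
      show ((H:ℂ)*Complex.I - (ε:ℂ)*Complex.I + ((-R : ℝ):ℂ)*1)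
          = -(R : ℂ) + H * Complex.I - ε * Complex.I by push_cast; ring] at h
    rw [← h]
    apply intervalIntegral.integral_congr
    intro x _
    congr 1; push_cast; ring
  have hright : Complex.I * (∫ y : ℝ in (0:ℝ)..H, ((R : ℂ) + y * Complex.I - ε * Complex.I)⁻¹)
      = Complex.log ((R : ℂ) + H * Complex.I - ε * Complex.I)
        - Complex.log ((R : ℂ) - ε * Complex.I) := by
    have h := integral_line_inv ((R : ℂ) - (ε : ℂ) * Complex.I) Complex.I 0 H (fun y _ => by
      simp only [Complex.mem_slitPlane_iff]
      left
      simpa using hR)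
    rw [show ((R:ℂ) - (ε:ℂ)*Complex.I + ((H:ℝ):ℂ)*Complex.I)
        = (R : ℂ) + H * Complex.I - ε * Complex.I by push_cast; ring,
      show ((R:ℂ) - (ε:ℂ)*Complex.I + ((0:ℝ):ℂ)*Complex.I) = (R : ℂ) - ε * Complex.I
        by push_cast; ring] at h
    rw [← h, ← intervalIntegral.integral_const_mul]
    apply intervalIntegral.integral_congr
    intro y _
    beta_reduce
    rw [show ((R:ℂ) + (y:ℝ) * Complex.I - (ε:ℂ) * Complex.I)
        = ((R:ℂ) - (ε:ℂ) * Complex.I + (y:ℝ) * Complex.I) by ring]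
  have hleft : Complex.I * (∫ y : ℝ in (0:ℝ)..H, (-(R : ℂ) + y * Complex.I - ε * Complex.I)⁻¹)
      = Complex.log ((R : ℂ) + ε * Complex.I - H * Complex.I)
        - Complex.log ((R : ℂ) + ε * Complex.I) := by
    have h := integral_line_inv ((R : ℂ) + (ε : ℂ) * Complex.I) (-Complex.I) 0 H (fun y _ => by
      simp only [Complex.mem_slitPlane_iff]
      left
      simpa using hR)
    rw [show ((R:ℂ) + (ε:ℂ)*Complex.I + ((H:ℝ):ℂ)*(-Complex.I))
        = (R : ℂ) + ε * Complex.I - H * Complex.I by push_cast; ring,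
      show ((R:ℂ) + (ε:ℂ)*Complex.I + ((0:ℝ):ℂ)*(-Complex.I)) = (R : ℂ) + ε * Complex.I
        by push_cast; ring] at h
    rw [← h, ← intervalIntegral.integral_const_mul]
    apply intervalIntegral.integral_congr
    intro y _
    beta_reduce
    rw [show ((R:ℂ) + (ε:ℂ)*Complex.I + (y:ℝ)*(-Complex.I))
        = -((-(R:ℂ) + (y:ℝ)*Complex.I - (ε:ℂ)*Complex.I)) by ring, inv_neg]
    ring
  rw [hbot, htop, hright, hleft,
    show -(R:ℂ) - ε*Complex.I = -((R:ℂ) + ε*Complex.I) by ring,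
    show -(R:ℂ) + H*Complex.I - ε*Complex.I = -((R:ℂ) + ε*Complex.I - H*Complex.I) by ring,
    log_neg_of_im_pos (by simpa using hε), log_neg_of_im_neg (by simp; linarith)]
  push_cast
  ring

noncomputable def Fe (t : ℝ) : ℂ → ℂ := fun z => Complex.exp (Complex.I * z * t)

lemma Fe_apply (t : ℝ) (z : ℂ) : Fe t z = Complex.exp (Complex.I * z * t) := rfl

lemma Fe_diff (t : ℝ) : Differentiable ℂ (Fe t) :=
  Complex.differentiable_exp.comp ((differentiable_id.const_mul _).mul_const _)

lemma Fe_norm (t : ℝ) (z : ℂ) : ‖Fe t z‖ = Real.exp (-(t * z.im)) := by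
  rw [Fe_apply]
  simp only [Complex.norm_exp]
  congr 1
  simp [Complex.mul_re, Complex.mul_im]
  ring

lemma Fe_pole (t ε : ℝ) : Fe t ((ε:ℂ) * Complex.I) = Complex.exp (-(ε:ℂ) * t) := by
  rw [Fe_apply]
  congr 1
  rw [show Complex.I * ((ε:ℂ) * Complex.I) * t = ((ε:ℂ) * t) * (Complex.I * Complex.I) by ring,
    Complex.I_mul_I]
  ring

lemma int_aux (t : ℝ) (φ : ℝ → ℂ) (w : ℂ) (hφ : Continuous φ) (h : ∀ y, φ y - w ≠ 0) (a b : ℝ) :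
    IntervalIntegrable (fun y => Fe t (φ y) * (φ y - w)⁻¹) volume a b :=
  (((Fe_diff t).continuous.comp hφ).mul
    ((hφ.sub continuous_const).inv₀ h)).intervalIntegrable a b

lemma int_aux' (t : ℝ) (φ : ℝ → ℂ) (w : ℂ) (hφ : Continuous φ) (h : ∀ y, φ y + w ≠ 0) (a b : ℝ) :
    IntervalIntegrable (fun y => Fe t (φ y) * (φ y + w)⁻¹) volume a b :=
  (((Fe_diff t).continuous.comp hφ).mul
    ((hφ.add continuous_const).inv₀ h)).intervalIntegrable a b

lemma int_auxu (φ : ℝ → ℂ) (w : ℂ) (hφ : Continuous φ) (h : ∀ y, φ y - w ≠ 0) (a b : ℝ) :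
    IntervalIntegrable (fun y => (φ y - w)⁻¹) volume a b :=
  ((hφ.sub continuous_const).inv₀ h).intervalIntegrable a b

lemma key_bound (t ε R : ℝ) (ht : 0 < t) (hε : 0 < ε) (hεR : ε < R) (hR2 : 2*ε ≤ R) :
    ‖(∫ x : ℝ in (-R)..R,
        (x : ℂ) * Complex.exp (Complex.I * x * t) / ((x : ℂ) ^ 2 + (ε : ℂ) ^ 2))
      - Complex.I * Real.pi * Complex.exp (-(ε : ℂ) * t)‖
      ≤ 4 * Real.exp (-(t*R)) + 2 / (R*t) := by
  have hR0 : 0 < R := hε.trans hεR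
  -- nonvanishing facts
  have hne1 : ∀ x : ℝ, ((x:ℂ) - (ε:ℂ) * Complex.I) ≠ 0 := by
    intro x h
    have := congrArg Complex.im h
    simp [hε.ne'] at this
  have hne2 : ∀ x : ℝ, ((x:ℂ) + (ε:ℂ) * Complex.I) ≠ 0 := by
    intro x h
    have := congrArg Complex.im h
    simp [hε.ne'] at this
  -- splitting of the integrand
  have hfac : ∀ x : ℝ, ((x:ℂ)^2 + (ε:ℂ)^2)
      = ((x:ℂ) - (ε:ℂ)*Complex.I) * ((x:ℂ) + (ε:ℂ)*Complex.I) := by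
    intro x
    linear_combination ((ε:ℂ)^2) * Complex.I_sq
  have hS : (∫ x : ℝ in (-R)..R,
        (x : ℂ) * Complex.exp (Complex.I * x * t) / ((x : ℂ) ^ 2 + (ε : ℂ) ^ 2))
      = (1/2 : ℂ) * (∫ x : ℝ in (-R)..R, Fe t x * ((x:ℂ) - (ε:ℂ)*Complex.I)⁻¹)
        + (1/2 : ℂ) * (∫ x : ℝ in (-R)..R, Fe t x * ((x:ℂ) + (ε:ℂ)*Complex.I)⁻¹) := by
    rw [← intervalIntegral.integral_const_mul, ← intervalIntegral.integral_const_mul,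
      ← intervalIntegral.integral_add
        ((int_aux t (fun x : ℝ => (x:ℂ)) _ Complex.continuous_ofReal hne1 (-R) R).const_mul _)
        ((int_aux' t (fun x : ℝ => (x:ℂ)) _ Complex.continuous_ofReal hne2 (-R) R).const_mul _)]
    apply intervalIntegral.integral_congr
    intro x _
    beta_reduce
    rw [Fe_apply, hfac x]
    have h1 : (x:ℂ) - Complex.I * ε ≠ 0 := by rw [mul_comm]; exact hne1 x
    have h2 : (x:ℂ) + Complex.I * ε ≠ 0 := by rw [mul_comm]; exact hne2 x
    field_simp
    ring
  -- the f₂ = Fe t z * (z + εi)⁻¹ part : no pole in the rectangle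
  have hB2 := rect_eq (fun z => Fe t z * (z + (ε:ℂ)*Complex.I)⁻¹) R R (by
    intro z hz
    rw [Complex.mem_reProdIm, Set.uIcc_of_le (neg_nonpos.mpr hR0.le |>.trans hR0.le),
      Set.uIcc_of_le hR0.le] at hz
    apply DifferentiableAt.differentiableWithinAt
    have hzne : (z + (ε:ℂ)*Complex.I) ≠ 0 := by
      intro h
      have := congrArg Complex.im h
      simp only [Complex.add_im, Complex.mul_im, Complex.ofReal_re, Complex.I_im,
        Complex.ofReal_im, Complex.I_re, mul_one, mul_zero, add_zero, zero_add,
        Complex.zero_im] at this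
      have := hz.2.1
      linarith
    exact ((Fe_diff t) z).mul ((differentiableAt_id.add_const _).inv hzne))
  beta_reduce at hB2
  -- the g = dslope part
  have hgdiff : Differentiable ℂ (dslope (Fe t) ((ε:ℂ)*Complex.I)) := by
    rw [← differentiableOn_univ]
    exact (Complex.differentiableOn_dslope Filter.univ_mem).mpr (Fe_diff t).differentiableOn
  have hgz : ∀ z : ℂ, z ≠ (ε:ℂ)*Complex.I → dslope (Fe t) ((ε:ℂ)*Complex.I) z
      = Fe t z * (z - (ε:ℂ)*Complex.I)⁻¹
        - Fe t ((ε:ℂ)*Complex.I) * (z - (ε:ℂ)*Complex.I)⁻¹ := by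
    intro z hz
    rw [dslope_of_ne _ hz, slope_def_field, div_eq_mul_inv, sub_mul]
  have hrect := rect_eq (dslope (Fe t) ((ε:ℂ)*Complex.I)) R R hgdiff.differentiableOn
  -- rewrite the four sides of hrect
  have hgbot : (∫ x : ℝ in (-R)..R, dslope (Fe t) ((ε:ℂ)*Complex.I) x)
      = (∫ x : ℝ in (-R)..R, Fe t x * ((x:ℂ) - (ε:ℂ)*Complex.I)⁻¹)
        - Fe t ((ε:ℂ)*Complex.I) * (∫ x : ℝ in (-R)..R, ((x:ℂ) - (ε:ℂ)*Complex.I)⁻¹) := by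
    rw [← intervalIntegral.integral_const_mul, ← intervalIntegral.integral_sub
      (int_aux t (fun x : ℝ => (x:ℂ)) _ Complex.continuous_ofReal hne1 (-R) R)
      ((int_auxu (fun x : ℝ => (x:ℂ)) _ Complex.continuous_ofReal hne1 (-R) R).const_mul _)]
    apply intervalIntegral.integral_congr
    intro x _
    exact hgz _ (by
      intro h
      have := congrArg Complex.im h
      simp [hε.ne] at this)
  have hgtop : (∫ x : ℝ in (-R)..R, dslope (Fe t) ((ε:ℂ)*Complex.I) (x + R*Complex.I))
      = (∫ x : ℝ in (-R)..R, Fe t (x + R*Complex.I) * ((x:ℂ) + R*Complex.I - (ε:ℂ)*Complex.I)⁻¹)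
        - Fe t ((ε:ℂ)*Complex.I)
          * (∫ x : ℝ in (-R)..R, ((x:ℂ) + R*Complex.I - (ε:ℂ)*Complex.I)⁻¹) := by
    have hnet : ∀ x : ℝ, ((x:ℂ) + R*Complex.I) - (ε:ℂ)*Complex.I ≠ 0 := by
      intro x h
      have := congrArg Complex.im h
      simp [sub_eq_zero, hεR.ne'] at this
    rw [← intervalIntegral.integral_const_mul, ← intervalIntegral.integral_sub
      (int_aux t (fun x : ℝ => (x:ℂ) + R*Complex.I) _ (by fun_prop) hnet (-R) R)
      ((int_auxu (fun x : ℝ => (x:ℂ) + R*Complex.I) _ (by fun_prop) hnet (-R) R).const_mul _)]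
    apply intervalIntegral.integral_congr
    intro x _
    refine hgz _ ?_
    intro h
    have := congrArg Complex.im h
    simp [hεR.ne'] at this
  have hgright : (∫ y : ℝ in (0:ℝ)..R, dslope (Fe t) ((ε:ℂ)*Complex.I) (R + y*Complex.I))
      = (∫ y : ℝ in (0:ℝ)..R, Fe t (R + y*Complex.I) * ((R:ℂ) + y*Complex.I - (ε:ℂ)*Complex.I)⁻¹)
        - Fe t ((ε:ℂ)*Complex.I)
          * (∫ y : ℝ in (0:ℝ)..R, ((R:ℂ) + y*Complex.I - (ε:ℂ)*Complex.I)⁻¹) := by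
    have hnet : ∀ y : ℝ, ((R:ℂ) + y*Complex.I) - (ε:ℂ)*Complex.I ≠ 0 := by
      intro y h
      have := congrArg Complex.re h
      simp [hR0.ne'] at this
    rw [← intervalIntegral.integral_const_mul, ← intervalIntegral.integral_sub
      (int_aux t (fun y : ℝ => (R:ℂ) + y*Complex.I) _ (by fun_prop) hnet 0 R)
      ((int_auxu (fun y : ℝ => (R:ℂ) + y*Complex.I) _ (by fun_prop) hnet 0 R).const_mul _)]
    apply intervalIntegral.integral_congr
    intro y _
    refine hgz _ ?_
    intro h
    have := congrArg Complex.re h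
    simp [hR0.ne'] at this
  have hgleft : (∫ y : ℝ in (0:ℝ)..R, dslope (Fe t) ((ε:ℂ)*Complex.I) (-R + y*Complex.I))
      = (∫ y : ℝ in (0:ℝ)..R, Fe t (-R + y*Complex.I) * (-(R:ℂ) + y*Complex.I - (ε:ℂ)*Complex.I)⁻¹)
        - Fe t ((ε:ℂ)*Complex.I)
          * (∫ y : ℝ in (0:ℝ)..R, (-(R:ℂ) + y*Complex.I - (ε:ℂ)*Complex.I)⁻¹) := by
    have hnet : ∀ y : ℝ, (-(R:ℂ) + y*Complex.I) - (ε:ℂ)*Complex.I ≠ 0 := by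
      intro y h
      have := congrArg Complex.re h
      simp [hR0.ne'] at this
    rw [← intervalIntegral.integral_const_mul, ← intervalIntegral.integral_sub
      (int_aux t (fun y : ℝ => -(R:ℂ) + y*Complex.I) _ (by fun_prop) hnet 0 R)
      ((int_auxu (fun y : ℝ => -(R:ℂ) + y*Complex.I) _ (by fun_prop) hnet 0 R).const_mul _)]
    apply intervalIntegral.integral_congr
    intro y _
    refine hgz _ ?_
    intro h
    have := congrArg Complex.re h
    simp [hR0.ne'] at this
  have hB1 : (∫ x : ℝ in (-R)..R, Fe t x * ((x:ℂ) - (ε:ℂ)*Complex.I)⁻¹)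
      = (∫ x : ℝ in (-R)..R, Fe t (x + R*Complex.I) * ((x:ℂ) + R*Complex.I - (ε:ℂ)*Complex.I)⁻¹)
        - Complex.I * (∫ y : ℝ in (0:ℝ)..R,
            Fe t (R + y*Complex.I) * ((R:ℂ) + y*Complex.I - (ε:ℂ)*Complex.I)⁻¹)
        + Complex.I * (∫ y : ℝ in (0:ℝ)..R,
            Fe t (-R + y*Complex.I) * (-(R:ℂ) + y*Complex.I - (ε:ℂ)*Complex.I)⁻¹)
        + 2*Real.pi*Complex.I * Fe t ((ε:ℂ)*Complex.I) := by
    rw [hgbot, hgtop, hgright, hgleft] at hrect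
    linear_combination hrect + Fe t ((ε:ℂ)*Complex.I) * pole_integral ε R R hε hR0 hεR
  -- norm bounds
  have hexp_pos := Real.exp_pos (-(t*R))
  have h2R : |R - (-R)| = 2*R := by
    rw [sub_neg_eq_add, abs_of_pos (by linarith)]
    ring
  have hnormle : ∀ (w : ℂ) (b : ℝ), 0 < b → b ≤ |w.im| ∨ b ≤ |w.re| → ‖w⁻¹‖ ≤ b⁻¹ := by
    intro w b hb hw
    rw [norm_inv]
    apply inv_anti₀ hb
    rcases hw with h | h
    · exact h.trans (Complex.abs_im_le_norm w)
    · exact h.trans (Complex.abs_re_le_norm w)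
  have htopb1 : ‖(∫ x : ℝ in (-R)..R,
        Fe t (x + R*Complex.I) * ((x:ℂ) + R*Complex.I - (ε:ℂ)*Complex.I)⁻¹)‖
      ≤ Real.exp (-(t*R))/(R-ε) * |R - (-R)| := by
    apply intervalIntegral.norm_integral_le_of_norm_le_const
    intro x _
    rw [norm_mul, Fe_norm]
    have him : ((x:ℂ) + R*Complex.I).im = R := by simp
    rw [him, div_eq_mul_inv]
    apply mul_le_mul_of_nonneg_left _ (Real.exp_pos _).le
    apply hnormle _ _ (by linarith)
    left
    rw [show ((x:ℂ) + R*Complex.I - (ε:ℂ)*Complex.I).im = R - ε by simp]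
    exact le_abs_self _
  have htopb2 : ‖(∫ x : ℝ in (-R)..R,
        Fe t (x + R*Complex.I) * ((x:ℂ) + R*Complex.I + (ε:ℂ)*Complex.I)⁻¹)‖
      ≤ Real.exp (-(t*R))/(R-ε) * |R - (-R)| := by
    apply intervalIntegral.norm_integral_le_of_norm_le_const
    intro x _
    rw [norm_mul, Fe_norm]
    have him : ((x:ℂ) + R*Complex.I).im = R := by simp
    rw [him, div_eq_mul_inv]
    apply mul_le_mul_of_nonneg_left _ (Real.exp_pos _).le
    apply hnormle _ _ (by linarith)
    left
    rw [show ((x:ℂ) + R*Complex.I + (ε:ℂ)*Complex.I).im = R + ε by simp]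
    calc R - ε ≤ R + ε := by linarith
      _ ≤ |R + ε| := le_abs_self _
  rw [h2R] at htopb1 htopb2
  have hTb : Real.exp (-(t*R))/(R-ε)*(2*R) ≤ 4*Real.exp (-(t*R)) := by
    rw [div_mul_eq_mul_div, div_le_iff₀ (by linarith)]
    nlinarith
  have hsb : ∀ (a d : ℝ → ℂ), (∀ y : ℝ, (a y).im = y) → (∀ y : ℝ, R ≤ |(d y).re|) →
      ‖(∫ y : ℝ in (0:ℝ)..R, Fe t (a y) * (d y)⁻¹)‖ ≤ 1/(R*t) := by
    intro a d ha hd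
    apply side_bound _ t R R ht hR0 hR0.le
    intro y
    rw [norm_mul, Fe_norm, ha y, div_eq_mul_inv]
    apply mul_le_mul_of_nonneg_left _ (Real.exp_pos _).le
    exact hnormle _ _ hR0 (Or.inr (hd y))
  have hs1 := hsb (fun y : ℝ => (R:ℂ) + y*Complex.I)
      (fun y : ℝ => (R:ℂ) + y*Complex.I - (ε:ℂ)*Complex.I)
      (fun y => by simp) (fun y => by
        rw [show (((R:ℂ) + y*Complex.I - (ε:ℂ)*Complex.I)).re = R by simp, abs_of_pos hR0])
  have hs2 := hsb (fun y : ℝ => -(R:ℂ) + y*Complex.I)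
      (fun y : ℝ => -(R:ℂ) + y*Complex.I - (ε:ℂ)*Complex.I)
      (fun y => by simp) (fun y => by
        rw [show ((-(R:ℂ) + y*Complex.I - (ε:ℂ)*Complex.I)).re = -R by simp, abs_neg,
          abs_of_pos hR0])
  have hs3 := hsb (fun y : ℝ => (R:ℂ) + y*Complex.I)
      (fun y : ℝ => (R:ℂ) + y*Complex.I + (ε:ℂ)*Complex.I)
      (fun y => by simp) (fun y => by
        rw [show (((R:ℂ) + y*Complex.I + (ε:ℂ)*Complex.I)).re = R by simp, abs_of_pos hR0])
  have hs4 := hsb (fun y : ℝ => -(R:ℂ) + y*Complex.I)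
      (fun y : ℝ => -(R:ℂ) + y*Complex.I + (ε:ℂ)*Complex.I)
      (fun y => by simp) (fun y => by
        rw [show ((-(R:ℂ) + y*Complex.I + (ε:ℂ)*Complex.I)).re = -R by simp, abs_neg,
          abs_of_pos hR0])
  have hnX : ∀ A B C : ℂ, ‖A - Complex.I*B + Complex.I*C‖ ≤ ‖A‖ + ‖B‖ + ‖C‖ := by
    intro A B C
    calc ‖A - Complex.I*B + Complex.I*C‖ ≤ ‖A - Complex.I*B‖ + ‖Complex.I*C‖ := norm_add_le _ _
      _ ≤ ‖A‖ + ‖Complex.I*B‖ + ‖Complex.I*C‖ := by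
          have := norm_sub_le A (Complex.I*B)
          linarith
      _ = ‖A‖ + ‖B‖ + ‖C‖ := by
          rw [norm_mul, norm_mul, Complex.norm_I, one_mul, one_mul]
  have hfinal : (∫ x : ℝ in (-R)..R,
        (x : ℂ) * Complex.exp (Complex.I * x * t) / ((x : ℂ) ^ 2 + (ε : ℂ) ^ 2))
      - Complex.I * Real.pi * Complex.exp (-(ε : ℂ) * t)
      = (1/2:ℂ) * ((∫ x : ℝ in (-R)..R,
            Fe t (x + R*Complex.I) * ((x:ℂ) + R*Complex.I - (ε:ℂ)*Complex.I)⁻¹)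
          - Complex.I * (∫ y : ℝ in (0:ℝ)..R,
              Fe t (R + y*Complex.I) * ((R:ℂ) + y*Complex.I - (ε:ℂ)*Complex.I)⁻¹)
          + Complex.I * (∫ y : ℝ in (0:ℝ)..R,
              Fe t (-R + y*Complex.I) * (-(R:ℂ) + y*Complex.I - (ε:ℂ)*Complex.I)⁻¹))
        + (1/2:ℂ) * ((∫ x : ℝ in (-R)..R,
            Fe t (x + R*Complex.I) * ((x:ℂ) + R*Complex.I + (ε:ℂ)*Complex.I)⁻¹)
          - Complex.I * (∫ y : ℝ in (0:ℝ)..R,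
              Fe t (R + y*Complex.I) * ((R:ℂ) + y*Complex.I + (ε:ℂ)*Complex.I)⁻¹)
          + Complex.I * (∫ y : ℝ in (0:ℝ)..R,
              Fe t (-R + y*Complex.I) * (-(R:ℂ) + y*Complex.I + (ε:ℂ)*Complex.I)⁻¹)) := by
    rw [hS, hB1, hB2, ← Fe_pole t ε]
    ring
  rw [hfinal]
  refine le_trans (norm_add_le _ _) ?_
  rw [norm_mul, norm_mul, show ‖(1/2:ℂ)‖ = 1/2 by norm_num]
  have hX1 := hnX (∫ x : ℝ in (-R)..R,
        Fe t (x + R*Complex.I) * ((x:ℂ) + R*Complex.I - (ε:ℂ)*Complex.I)⁻¹)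
      (∫ y : ℝ in (0:ℝ)..R, Fe t (R + y*Complex.I) * ((R:ℂ) + y*Complex.I - (ε:ℂ)*Complex.I)⁻¹)
      (∫ y : ℝ in (0:ℝ)..R, Fe t (-R + y*Complex.I) * (-(R:ℂ) + y*Complex.I - (ε:ℂ)*Complex.I)⁻¹)
  have hX2 := hnX (∫ x : ℝ in (-R)..R,
        Fe t (x + R*Complex.I) * ((x:ℂ) + R*Complex.I + (ε:ℂ)*Complex.I)⁻¹)
      (∫ y : ℝ in (0:ℝ)..R, Fe t (R + y*Complex.I) * ((R:ℂ) + y*Complex.I + (ε:ℂ)*Complex.I)⁻¹)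
      (∫ y : ℝ in (0:ℝ)..R, Fe t (-R + y*Complex.I) * (-(R:ℂ) + y*Complex.I + (ε:ℂ)*Complex.I)⁻¹)
  have h2Rt : 1/(R*t) + 1/(R*t) = 2/(R*t) := by ring
  linarith


/-- For every `t > 0` and `ε > 0`, the symmetric improper integral of
`x e^{ixt}/(x² + ε²)` over `ℝ` equals `iπ e^{−εt}`. -/
theorem symmetric_integral_exp (t ε : ℝ) (ht : 0 < t) (hε : 0 < ε) :
    Tendsto
      (fun R : ℝ =>
        ∫ x in (-R)..R, (x : ℂ) * Complex.exp (Complex.I * x * t) / ((x : ℂ) ^ 2 + (ε : ℂ) ^ 2))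
      atTop (nhds (Complex.I * Real.pi * Complex.exp (-(ε : ℂ) * t))) := by
  rw [← tendsto_sub_nhds_zero_iff]
  have hb : ∀ᶠ R : ℝ in atTop,
      ‖(∫ x : ℝ in (-R)..R,
          (x : ℂ) * Complex.exp (Complex.I * x * t) / ((x : ℂ) ^ 2 + (ε : ℂ) ^ 2))
        - Complex.I * Real.pi * Complex.exp (-(ε : ℂ) * t)‖
        ≤ 4 * Real.exp (-(t*R)) + 2 / (R*t) := by
    filter_upwards [eventually_gt_atTop ε, eventually_ge_atTop (2*ε)] with R h1 h2
    exact key_bound t ε R ht hε h1 h2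
  refine squeeze_zero_norm' hb ?_
  · have l1 : Tendsto (fun R : ℝ => Real.exp (-(t*R))) atTop (nhds 0) :=
      Real.tendsto_exp_atBot.comp
        (tendsto_neg_atTop_atBot.comp (tendsto_id.const_mul_atTop ht))
    have l2 : Tendsto (fun R : ℝ => 2/(R*t)) atTop (nhds 0) := by
      have he : (fun R : ℝ => 2/(R*t)) = fun R : ℝ => (2/t)/R := by
        funext R
        rw [div_div, mul_comm]
      rw [he]
      exact tendsto_const_nhds.div_atTop tendsto_id
    simpa using (l1.const_mul 4).add l2
end

section
/- Let c < 0 be a real number and let s = √c denote the principal complex square root of c (so s = i√|c|). Define ψ₂ : (0,∞) → ℂ by ψ₂(y) = −y/(2s) + ((y² − c)/(4c)) · Log((y + s)/(y − s)), where Log is the principal branch of the complex logarithm (the argument (y + s)/(y − s) never lies on the nonpositive real axis for y > 0). Then ψ₂ is twice differentiable on (0,∞) and satisfies (y² − c) ψ₂''(y) = 2 ψ₂(y) for all y > 0; that is, ψ₂ solves the Rayleigh equation with α = 0 for the profile U_s(y) = y². -/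
open Filter Set

private lemma logq_hasDerivAt (s z : ℂ) (h1 : z + s ≠ 0) (h2 : z - s ≠ 0)
    (hslit : (z + s) / (z - s) ∈ Complex.slitPlane) :
    HasDerivAt (fun w => Complex.log ((w + s) / (w - s)))
      (-2 * s / ((z - s) * (z + s))) z := by
  have hq : HasDerivAt (fun w => (w + s) / (w - s))
      ((1 * (z - s) - (z + s) * 1) / (z - s) ^ 2) z :=
    ((hasDerivAt_id z).add_const s).div ((hasDerivAt_id z).sub_const s) h2
  have h := (Complex.hasDerivAt_log hslit).comp z hq
  refine h.congr_deriv (Eq.symm ?_)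
  field_simp
  ring

private lemma F_hasDerivAt (c s z : ℂ) (hs : s ≠ 0) (hc : c ≠ 0) (hs2 : s ^ 2 = c)
    (h1 : z + s ≠ 0) (h2 : z - s ≠ 0)
    (hslit : (z + s) / (z - s) ∈ Complex.slitPlane) :
    HasDerivAt (fun w => -w / (2 * s) + ((w ^ 2 - c) / (4 * c)) * Complex.log ((w + s) / (w - s)))
      (-1 / s + z / (2 * c) * Complex.log ((z + s) / (z - s))) z := by
  have hL := logq_hasDerivAt s z h1 h2 hslit
  have hA : HasDerivAt (fun w : ℂ => -w / (2 * s)) (-1 / (2 * s)) z := by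
    simpa using ((hasDerivAt_id z).neg.div_const (2 * s))
  have hB : HasDerivAt (fun w : ℂ => (w ^ 2 - c) / (4 * c)) (2 * z / (4 * c)) z := by
    simpa using ((hasDerivAt_pow 2 z).sub_const c).div_const (4 * c)
  have h := hA.add (hB.mul hL)
  have hzs : (z - s) * (z + s) = z ^ 2 - c := by linear_combination -hs2
  have hz3 : z ^ 2 - c ≠ 0 := hzs ▸ mul_ne_zero h2 h1
  rw [hzs] at h
  have hcancel : (z ^ 2 - c) / (4 * c) * (-2 * s / (z ^ 2 - c)) = -s / (2 * c) := by
    field_simp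
    ring
  rw [hcancel] at h
  refine h.congr_deriv (Eq.symm ?_)
  field_simp
  ring_nf
  linear_combination 4 * hs2

private lemma G_hasDerivAt (c s z : ℂ) (hs : s ≠ 0) (hc : c ≠ 0) (hs2 : s ^ 2 = c)
    (h1 : z + s ≠ 0) (h2 : z - s ≠ 0)
    (hslit : (z + s) / (z - s) ∈ Complex.slitPlane) :
    HasDerivAt (fun w => -1 / s + w / (2 * c) * Complex.log ((w + s) / (w - s)))
      (Complex.log ((z + s) / (z - s)) / (2 * c) - z * s / (c * (z ^ 2 - c))) z := by
  have hL := logq_hasDerivAt s z h1 h2 hslit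
  have hB : HasDerivAt (fun w : ℂ => w / (2 * c)) (1 / (2 * c)) z := by
    simpa using (hasDerivAt_id z).div_const (2 * c)
  have h := ((hB.mul hL).const_add (-1 / s))
  have hzs : (z - s) * (z + s) = z ^ 2 - c := by linear_combination -hs2
  have hz3 : z ^ 2 - c ≠ 0 := hzs ▸ mul_ne_zero h2 h1
  rw [hzs] at h
  refine h.congr_deriv (Eq.symm ?_)
  field_simp [hz3]
  ring_nf

/-- For real `c < 0` and `s = √c = i√|c|` the principal square root, the explicit function
`ψ₂(y) = −y/(2s) + ((y² − c)/(4c)) Log((y+s)/(y−s))` is twice differentiable on `(0,∞)` and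
solves `(y² − c) ψ₂'' = 2 ψ₂`, i.e. the Rayleigh equation with `α = 0` for `U_s(y) = y²`. -/
theorem rayleigh_explicit_parabola (c : ℝ) (hc : c < 0) :
    ∀ y : ℝ, 0 < y →
      DifferentiableAt ℝ
        (fun y : ℝ =>
          -(y : ℂ) / (2 * (Complex.I * (Real.sqrt (-c) : ℂ)))
            + (((y : ℂ) ^ 2 - (c : ℂ)) / (4 * (c : ℂ)))
              * Complex.log (((y : ℂ) + Complex.I * (Real.sqrt (-c) : ℂ))
                  / ((y : ℂ) - Complex.I * (Real.sqrt (-c) : ℂ)))) y ∧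
      DifferentiableAt ℝ
        (deriv (fun y : ℝ =>
          -(y : ℂ) / (2 * (Complex.I * (Real.sqrt (-c) : ℂ)))
            + (((y : ℂ) ^ 2 - (c : ℂ)) / (4 * (c : ℂ)))
              * Complex.log (((y : ℂ) + Complex.I * (Real.sqrt (-c) : ℂ))
                  / ((y : ℂ) - Complex.I * (Real.sqrt (-c) : ℂ))))) y ∧
      ((y : ℂ) ^ 2 - (c : ℂ)) *
          deriv (deriv (fun y : ℝ =>
            -(y : ℂ) / (2 * (Complex.I * (Real.sqrt (-c) : ℂ)))
              + (((y : ℂ) ^ 2 - (c : ℂ)) / (4 * (c : ℂ)))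
                * Complex.log (((y : ℂ) + Complex.I * (Real.sqrt (-c) : ℂ))
                    / ((y : ℂ) - Complex.I * (Real.sqrt (-c) : ℂ))))) y
        = 2 * (-(y : ℂ) / (2 * (Complex.I * (Real.sqrt (-c) : ℂ)))
            + (((y : ℂ) ^ 2 - (c : ℂ)) / (4 * (c : ℂ)))
              * Complex.log (((y : ℂ) + Complex.I * (Real.sqrt (-c) : ℂ))
                  / ((y : ℂ) - Complex.I * (Real.sqrt (-c) : ℂ)))) := by
  intro y hy
  have hnc : (0 : ℝ) < -c := by linarith
  set a := Real.sqrt (-c) with ha_def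
  have ha : 0 < a := Real.sqrt_pos.2 hnc
  set s : ℂ := Complex.I * (a : ℂ) with hs_def
  have hs2 : s ^ 2 = (c : ℂ) := by
    rw [hs_def, mul_pow, Complex.I_sq, ← Complex.ofReal_pow, Real.sq_sqrt hnc.le]
    push_cast
    ring
  have hsne : s ≠ 0 := by
    rw [hs_def]
    exact mul_ne_zero Complex.I_ne_zero (by exact_mod_cast ha.ne')
  have hcC : (c : ℂ) ≠ 0 := by exact_mod_cast hc.ne
  have hfacts : ∀ t : ℝ, 0 < t →
      (t : ℂ) + s ≠ 0 ∧ (t : ℂ) - s ≠ 0 ∧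
        ((t : ℂ) + s) / ((t : ℂ) - s) ∈ Complex.slitPlane := by
    intro t ht
    have e1 : (t : ℂ) + s ≠ 0 := by
      intro h
      have := congrArg Complex.re h
      simp [hs_def] at this
      linarith
    have e2 : (t : ℂ) - s ≠ 0 := by
      intro h
      have := congrArg Complex.re h
      simp [hs_def] at this
      linarith
    refine ⟨e1, e2, Or.inr ?_⟩
    have hN : 0 < Complex.normSq ((t : ℂ) - s) := Complex.normSq_pos.2 e2
    have him : 0 < (((t : ℂ) + s) / ((t : ℂ) - s)).im := by
      rw [Complex.div_im]
      simp only [hs_def, Complex.add_im, Complex.sub_im, Complex.add_re, Complex.sub_re,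
        Complex.mul_im, Complex.mul_re, Complex.I_im, Complex.I_re, Complex.ofReal_im,
        Complex.ofReal_re]
      ring_nf
      positivity
    exact him.ne'
  have key : ∀ t : ℝ, 0 < t → HasDerivAt (fun y : ℝ =>
        -(y : ℂ) / (2 * s) + (((y : ℂ) ^ 2 - (c : ℂ)) / (4 * (c : ℂ)))
          * Complex.log (((y : ℂ) + s) / ((y : ℂ) - s)))
      (-1 / s + (t : ℂ) / (2 * (c : ℂ)) * Complex.log (((t : ℂ) + s) / ((t : ℂ) - s))) t := by
    intro t ht
    obtain ⟨e1, e2, e3⟩ := hfacts t ht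
    exact (F_hasDerivAt (c : ℂ) s (t : ℂ) hsne hcC hs2 e1 e2 e3).comp_ofReal
  have key2 : ∀ t : ℝ, 0 < t → HasDerivAt (fun t : ℝ =>
        -1 / s + (t : ℂ) / (2 * (c : ℂ)) * Complex.log (((t : ℂ) + s) / ((t : ℂ) - s)))
      (Complex.log (((t : ℂ) + s) / ((t : ℂ) - s)) / (2 * (c : ℂ))
        - (t : ℂ) * s / ((c : ℂ) * ((t : ℂ) ^ 2 - (c : ℂ)))) t := by
    intro t ht
    obtain ⟨e1, e2, e3⟩ := hfacts t ht
    exact (G_hasDerivAt (c : ℂ) s (t : ℂ) hsne hcC hs2 e1 e2 e3).comp_ofReal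
  have hev : deriv (fun y : ℝ =>
        -(y : ℂ) / (2 * s) + (((y : ℂ) ^ 2 - (c : ℂ)) / (4 * (c : ℂ)))
          * Complex.log (((y : ℂ) + s) / ((y : ℂ) - s)))
      =ᶠ[nhds y] (fun t : ℝ =>
        -1 / s + (t : ℂ) / (2 * (c : ℂ)) * Complex.log (((t : ℂ) + s) / ((t : ℂ) - s))) := by
    filter_upwards [isOpen_Ioi.mem_nhds hy] with t ht
    exact (key t ht).deriv
  refine ⟨(key y hy).differentiableAt, ?_, ?_⟩
  · exact (key2 y hy).differentiableAt.congr_of_eventuallyEq hev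
  · rw [Filter.EventuallyEq.deriv_eq hev, (key2 y hy).deriv]
    obtain ⟨e1, e2, e3⟩ := hfacts y hy
    have hzs : ((y : ℂ) - s) * ((y : ℂ) + s) = (y : ℂ) ^ 2 - (c : ℂ) := by
      linear_combination -hs2
    have hz3 : (y : ℂ) ^ 2 - (c : ℂ) ≠ 0 := hzs ▸ mul_ne_zero e2 e1
    have hs2' : Complex.I ^ 2 * (a : ℂ) ^ 2 = (c : ℂ) := by
      rw [show Complex.I ^ 2 * (a : ℂ) ^ 2 = s ^ 2 by rw [hs_def]; ring, hs2]
    field_simp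
    ring_nf
    linear_combination (-8 * (y : ℂ)) * hs2'
end

section
/- Let c < 0 be a real number, let s = √c be the principal complex square root of c, and define ψ₂ : (0,∞) → ℂ by ψ₂(y) = −y/(2s) + ((y² − c)/(4c)) · Log((y + s)/(y − s)), with Log the principal complex logarithm. Then lim_{y→+∞} y · ψ₂(y) = −s/3; in particular ψ₂(y) behaves like −1/(3z) as y → +∞, where z = y/√c. -/
open Filter Set

private lemma aux_summable {C r : ℝ} (hr0 : 0 ≤ r) (hr : r < 1) (f : ℕ → ℂ)
    (h : ∀ n, ‖f n‖ ≤ C * r ^ n) : Summable f :=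
  Summable.of_norm_bounded ((summable_geometric_of_lt_one hr0 hr).mul_left C) h

lemma rayleigh_key (a y : ℝ) (ha : 0 < a) (hy : a < y) :
    HasSum (fun n : ℕ => -(Complex.I * (a:ℂ)) * (-((a:ℂ)/(y:ℂ))^2)^n / ((2*n+1)*(2*n+3)))
      ((y:ℂ) * (-(y:ℂ) / (2*(Complex.I*(a:ℂ)))
        + (((y:ℂ)^2 - (-(a:ℂ)^2)) / (4*(-(a:ℂ)^2)))
          * Complex.log (((y:ℂ) + Complex.I*(a:ℂ)) / ((y:ℂ) - Complex.I*(a:ℂ))))) := by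
  have hy0 : (0:ℝ) < y := ha.trans hy
  have hyC : (y:ℂ) ≠ 0 := by exact_mod_cast hy0.ne'
  have haC : (a:ℂ) ≠ 0 := by exact_mod_cast ha.ne'
  set v : ℂ := (a:ℂ)/(y:ℂ) with hv
  have hnv : ‖v‖ < 1 := by
    rw [hv, ← Complex.ofReal_div, Complex.norm_real, Real.norm_eq_abs,
      abs_of_pos (div_pos ha hy0)]
    rw [div_lt_one hy0]; exact hy
  have hyv : (y:ℂ) * v = (a:ℂ) := by rw [hv]; field_simp
  -- log identity
  have hlog : Complex.log (((y:ℂ) + Complex.I*(a:ℂ)) / ((y:ℂ) - Complex.I*(a:ℂ)))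
      = 2 * Complex.I * Complex.arctan v := by
    have hden : (y:ℂ) - Complex.I*(a:ℂ) ≠ 0 := by
      intro h
      have := congrArg Complex.re h
      simp at this
      exact hy0.ne' this
    have hden2 : (1:ℂ) - v * Complex.I ≠ 0 := by
      intro h
      have h2 : v * Complex.I = 1 := by linear_combination -h
      have := congrArg norm h2
      rw [norm_mul, Complex.norm_I, mul_one, norm_one] at this
      exact hnv.ne this
    have h1 : (1 + v * Complex.I) / (1 - v * Complex.I)
        = ((y:ℂ) + Complex.I*(a:ℂ)) / ((y:ℂ) - Complex.I*(a:ℂ)) := by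
      rw [div_eq_div_iff hden2 hden, hv]
      field_simp
    rw [Complex.arctan, h1]
    generalize Complex.log _ = L
    rw [show (2:ℂ) * Complex.I * (-Complex.I/2 * L) = -(Complex.I*Complex.I) * L by ring,
      Complex.I_mul_I]
    ring
  have hnv2 : ‖v‖^2 < 1 := by nlinarith [norm_nonneg v]
  have hnormpow : ∀ n : ℕ, ‖(-v^2)^n‖ = (‖v‖^2)^n := by
    intro n
    rw [norm_pow, norm_neg, norm_pow]
  have hden1 : ∀ n : ℕ, (1:ℝ) ≤ ‖(2*(n:ℂ)+1)‖ := by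
    intro n
    have : ((2*n+1 : ℕ):ℂ) = 2*(n:ℂ)+1 := by push_cast; ring
    rw [← this, Complex.norm_natCast]
    exact_mod_cast Nat.one_le_iff_ne_zero.mpr (by omega)
  have hc1 : ∀ n : ℕ, (2*(n:ℂ)+1) ≠ 0 := by
    intro n
    have : ((2*n+1 : ℕ):ℂ) ≠ 0 := Nat.cast_ne_zero.mpr (by omega)
    push_cast at this; exact this
  have hc3 : ∀ n : ℕ, (2*(n:ℂ)+3) ≠ 0 := by
    intro n
    have : ((2*n+3 : ℕ):ℂ) ≠ 0 := Nat.cast_ne_zero.mpr (by omega)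
    push_cast at this; exact this
  -- arctan series rewritten
  have h1 : HasSum (fun n : ℕ => v * (-v^2)^n / (2*(n:ℂ)+1)) (Complex.arctan v) := by
    have h0 := Complex.hasSum_arctan hnv
    have he : (fun n : ℕ => v * (-v^2)^n / (2*(n:ℂ)+1))
        = (fun n : ℕ => (-1)^n * v^(2*n+1) / ((2*n+1 : ℕ):ℂ)) := by
      funext n
      conv_rhs => rw [pow_succ, pow_mul]
      push_cast
      ring
    rw [he]; exact h0
  -- multiplied
  have hD : HasSum (fun n : ℕ => (a:ℂ)*((y:ℂ)^2+(a:ℂ)^2) * (-v^2)^n / (2*(n:ℂ)+1))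
      ((y:ℂ)*((y:ℂ)^2+(a:ℂ)^2) * Complex.arctan v) := by
    have h2 := h1.mul_left ((y:ℂ)*((y:ℂ)^2+(a:ℂ)^2))
    have he : (fun n : ℕ => (a:ℂ)*((y:ℂ)^2+(a:ℂ)^2) * (-v^2)^n / (2*(n:ℂ)+1))
        = (fun n : ℕ => (y:ℂ)*((y:ℂ)^2+(a:ℂ)^2) * (v * (-v^2)^n / (2*(n:ℂ)+1))) := by
      funext n
      rw [show (y:ℂ)*((y:ℂ)^2+(a:ℂ)^2) * (v * (-v^2)^n / (2*(n:ℂ)+1))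
        = ((y:ℂ)*v) *(((y:ℂ)^2+(a:ℂ)^2) * (-v^2)^n / (2*(n:ℂ)+1)) by ring, hyv]
      ring
    rw [he]; exact h2
  have hsumA : Summable (fun n : ℕ => (y:ℂ)^2*(a:ℂ) * (-v^2)^n / (2*(n:ℂ)+1)) := by
    refine aux_summable (C := y^2*a) (sq_nonneg ‖v‖) hnv2 _ (fun n => ?_)
    rw [norm_div, norm_mul, hnormpow]
    rw [div_le_iff₀ (lt_of_lt_of_le one_pos (hden1 n))]
    have h2 : ‖(y:ℂ)^2*(a:ℂ)‖ = y^2*a := by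
      rw [norm_mul, norm_pow, Complex.norm_real, Complex.norm_real, Real.norm_eq_abs,
        Real.norm_eq_abs, abs_of_pos hy0, abs_of_pos ha]
    rw [h2]
    calc y^2*a * (‖v‖^2)^n = y^2*a*(‖v‖^2)^n * 1 := by ring
      _ ≤ y^2*a*(‖v‖^2)^n * ‖2*(n:ℂ)+1‖ :=
          mul_le_mul_of_nonneg_left (hden1 n) (by positivity)
  have hAval := hsumA.hasSum
  set SA := ∑' n : ℕ, (y:ℂ)^2*(a:ℂ) * (-v^2)^n / (2*(n:ℂ)+1) with hSA
  have hBsum : HasSum (fun n : ℕ => (a:ℂ)^3 * (-v^2)^n / (2*(n:ℂ)+1))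
      ((y:ℂ)*((y:ℂ)^2+(a:ℂ)^2) * Complex.arctan v - SA) := by
    have h2 := hD.sub hAval
    have he : (fun n : ℕ => (a:ℂ)^3 * (-v^2)^n / (2*(n:ℂ)+1))
        = (fun n : ℕ => (a:ℂ)*((y:ℂ)^2+(a:ℂ)^2) * (-v^2)^n / (2*(n:ℂ)+1)
            - (y:ℂ)^2*(a:ℂ) * (-v^2)^n / (2*(n:ℂ)+1)) := by
      funext n; ring
    rw [he]; exact h2
  have hAshift : HasSum (fun n : ℕ => (y:ℂ)^2*(a:ℂ) * (-v^2)^(n+1) / (2*((n:ℂ)+1)+1))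
      (SA - (y:ℂ)^2*(a:ℂ)) := by
    have h2 : HasSum (fun n : ℕ => (y:ℂ)^2*(a:ℂ) * (-v^2)^n / (2*(n:ℂ)+1))
        ((SA - (y:ℂ)^2*(a:ℂ)) + ∑ i ∈ Finset.range 1,
          (y:ℂ)^2*(a:ℂ) * (-v^2)^i / (2*(i:ℂ)+1)) := by
      convert hAval using 1
      simp
    have h3 := (hasSum_nat_add_iff (f := fun n : ℕ => (y:ℂ)^2*(a:ℂ) * (-v^2)^n / (2*(n:ℂ)+1)) 1).mpr h2
    convert h3 using 2 with n
    · rfl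
    push_cast
    ring_nf
  have hAB := (hAshift.add hBsum).mul_left (-Complex.I/(2*(a:ℂ)^2))
  have hE := hAB
  -- identify term and value
  convert hE using 1
  · rfl
  · funext n
    have hyv2 : (y:ℂ)^2 * (-v^2) = -(a:ℂ)^2 := by
      rw [show (y:ℂ)^2 * (-v^2) = -((y:ℂ)*v)^2 by ring, hyv]
    rw [pow_succ ((-v^2)) n]
    rw [show (y:ℂ)^2*(a:ℂ)*((-v^2)^n*(-v^2)) = (a:ℂ)*(-v^2)^n*((y:ℂ)^2*(-v^2)) by ring, hyv2]
    have c1 := hc1 n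
    have c3 := hc3 n
    have c3' : (2*((n:ℂ)+1)+1) ≠ 0 := by
      have := hc3 n; rw [show (2*((n:ℂ)+1)+1) = 2*(n:ℂ)+3 by ring]; exact this
    field_simp
    ring
  · rw [hlog]
    generalize Complex.arctan v = S
    have e0 : -(y:ℂ)/(2*(Complex.I*(a:ℂ))) = Complex.I*(y:ℂ)/(2*(a:ℂ)) := by
      rw [div_eq_div_iff (by simp [Complex.I_ne_zero, haC]) (by simp [haC])]
      linear_combination (-2*(a:ℂ)*(y:ℂ)) * Complex.I_mul_I
    rw [e0]
    field_simp
    ring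


/-- For real `c < 0`, `s = √c = i√|c|`, and
`ψ₂(y) = −y/(2s) + ((y² − c)/(4c)) Log((y+s)/(y−s))`, one has
`lim_{y→+∞} y ψ₂(y) = −s/3`; i.e. `ψ₂(y) ∼ −1/(3z)` with `z = y/√c` as `y → +∞`. -/
theorem rayleigh_explicit_parabola_asymptotics (c : ℝ) (hc : c < 0) :
    Tendsto
      (fun y : ℝ =>
        (y : ℂ) *
          (-(y : ℂ) / (2 * (Complex.I * (Real.sqrt (-c) : ℂ)))
            + (((y : ℂ) ^ 2 - (c : ℂ)) / (4 * (c : ℂ)))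
              * Complex.log (((y : ℂ) + Complex.I * (Real.sqrt (-c) : ℂ))
                  / ((y : ℂ) - Complex.I * (Real.sqrt (-c) : ℂ)))))
      atTop (nhds (-(Complex.I * (Real.sqrt (-c) : ℂ)) / 3)) := by
  set a : ℝ := Real.sqrt (-c) with ha'
  have ha : 0 < a := Real.sqrt_pos.mpr (by linarith)
  have hca : (c:ℂ) = -(a:ℂ)^2 := by
    have h2 : a^2 = -c := Real.sq_sqrt (by linarith)
    have : (c:ℝ) = -a^2 := by linarith
    rw [this]; push_cast; ring
  simp only [hca]
  rw [← tendsto_sub_nhds_zero_iff]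
  have hlim : Tendsto (fun y : ℝ => 2*a^3/y^2) atTop (nhds 0) :=
    tendsto_const_nhds.div_atTop (tendsto_pow_atTop (by norm_num))
  refine squeeze_zero_norm' ?_ hlim
  filter_upwards [eventually_ge_atTop (2*a)] with y hy2a
  have hay : a < y := by linarith
  have hy0 : (0:ℝ) < y := ha.trans hay
  have hs := rayleigh_key a y ha hay
  set f : ℕ → ℂ := fun n : ℕ =>
    -(Complex.I * (a:ℂ)) * (-((a:ℂ)/(y:ℂ))^2)^n / ((2*(n:ℂ)+1)*(2*(n:ℂ)+3)) with hf
  set E : ℂ := ((y:ℂ) * (-(y:ℂ) / (2*(Complex.I*(a:ℂ)))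
      + (((y:ℂ)^2 - (-(a:ℂ)^2)) / (4*(-(a:ℂ)^2)))
        * Complex.log (((y:ℂ) + Complex.I*(a:ℂ)) / ((y:ℂ) - Complex.I*(a:ℂ))))) with hE
  have hf0 : f 0 = -(Complex.I * (a:ℂ))/3 := by
    rw [hf]; norm_num
  have h2 : HasSum (fun n => f (n+1)) (E - -(Complex.I * (a:ℂ))/3) := by
    refine (hasSum_nat_add_iff 1).mpr ?_
    convert hs using 1
    · rfl
    simp [hf0]
  -- geometric bound
  set w : ℝ := a/y with hw
  have hw0 : 0 < w := div_pos ha hy0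
  have hwh : w ≤ 1/2 := by
    rw [hw, div_le_iff₀ hy0]; linarith
  have hw1 : w^2 < 1 := by nlinarith
  have hnormv : ‖((a:ℂ)/(y:ℂ))‖ = w := by
    rw [← Complex.ofReal_div, Complex.norm_real, Real.norm_eq_abs, abs_of_pos hw0]
  have hbound : ∀ n : ℕ, ‖f (n+1)‖ ≤ a*w^2 * (w^2)^n := by
    intro n
    rw [hf]
    simp only [norm_div, norm_mul, norm_neg, norm_pow, Complex.norm_I, one_mul,
      Complex.norm_real, Real.norm_eq_abs, abs_of_pos ha, abs_of_pos hy0]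
    have hd1 : (1:ℝ) ≤ ‖2*((n+1:ℕ):ℂ)+1‖ := by
      have h9 : ((2*(n+1)+1 : ℕ):ℂ) = 2*((n+1:ℕ):ℂ)+1 := by push_cast; ring
      rw [← h9, Complex.norm_natCast]
      exact_mod_cast Nat.one_le_iff_ne_zero.mpr (by omega)
    have hd3 : (1:ℝ) ≤ ‖2*((n+1:ℕ):ℂ)+3‖ := by
      have h9 : ((2*(n+1)+3 : ℕ):ℂ) = 2*((n+1:ℕ):ℂ)+3 := by push_cast; ring
      rw [← h9, Complex.norm_natCast]
      exact_mod_cast Nat.one_le_iff_ne_zero.mpr (by omega)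
    refine le_trans (div_le_self (by positivity) ?_) (le_of_eq ?_)
    · nlinarith [hd1, hd3]
    · rw [hw]; ring
  have hgeo : HasSum (fun n : ℕ => a*w^2 * (w^2)^n) (a*w^2 * (1-w^2)⁻¹) :=
    (hasSum_geometric_of_lt_one (by positivity) hw1).mul_left _
  have hnorm : ‖E - -(Complex.I * (a:ℂ))/3‖ ≤ a*w^2 * (1-w^2)⁻¹ := by
    rw [← h2.tsum_eq]
    exact tsum_of_norm_bounded hgeo hbound
  refine hnorm.trans ?_
  have hw2 : w^2 = a^2/y^2 := by rw [hw]; field_simp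
  have h14 : w^2 ≤ 1/4 := by nlinarith
  have : (1-w^2)⁻¹ ≤ 2 := by
    rw [inv_le_comm₀ (by linarith) (by norm_num)]; linarith
  calc a*w^2*(1-w^2)⁻¹ ≤ a*w^2*2 := by
        apply mul_le_mul_of_nonneg_left this (by positivity)
    _ = 2*a^3/y^2 := by rw [hw2]; field_simp
end

section
/- Let α > 0, a ∈ ℝ, and let q : [a, ∞) → ℂ be continuous. Let ψ : [a, ∞) → ℂ be twice differentiable with ψ''(y) = q(y)ψ(y) for all y ≥ a, ψ(y) ≠ 0 for all y ≥ a, and ψ(y) e^{αy} → 1 as y → +∞. Fix y₀ ≥ a and define φ(y) = ψ(y) ∫_{y₀}^{y} ψ(x)^{−2} dx. Then φ is twice differentiable, φ''(y) = q(y)φ(y) for all y ≥ a, the Wronskian satisfies φ'(y)ψ(y) − φ(y)ψ'(y) = 1 for all y ≥ a, and φ(y) e^{−αy} → 1/(2α) as y → +∞; in particular |φ(y)| → +∞ and φ behaves like e^{+αy}. -/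
open Filter Set intervalIntegral

lemma integral_exp_mul_real' {c : ℝ} (hc : c ≠ 0) (a b : ℝ) :
    (∫ x in a..b, Real.exp (c * x)) = (Real.exp (c * b) - Real.exp (c * a)) / c := by
  have D : ∀ x : ℝ, HasDerivAt (fun y : ℝ => Real.exp (c * y) / c) (Real.exp (c * x)) x := by
    intro x
    have h := ((Real.hasDerivAt_exp (c * x)).comp x ((hasDerivAt_id x).const_mul c)).div_const c
    simpa [mul_comm, mul_div_assoc, mul_div_cancel_left₀ _ hc] using h
  rw [intervalIntegral.integral_eq_sub_of_hasDerivAt (fun x _ => D x)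
    ((Real.continuous_exp.comp (continuous_const.mul continuous_id)).continuousOn.intervalIntegrable)]
  ring

lemma key_limit' {c : ℝ} (hc : 0 < c) (y₀ : ℝ) {r : ℝ → ℂ} {L : ℂ}
    (hr : Continuous r) (hL : Tendsto r atTop (nhds L)) :
    Tendsto (fun y : ℝ => Complex.exp (-(c : ℂ) * y) * ∫ x in y₀..y, r x * Complex.exp ((c : ℂ) * x))
      atTop (nhds (L / c)) := by
  have hcC : (c : ℂ) ≠ 0 := by exact_mod_cast hc.ne'
  have hec : Continuous fun x : ℝ => Complex.exp ((c : ℂ) * x) :=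
    Complex.continuous_exp.comp (by continuity)
  have hFc : Continuous fun x : ℝ => r x * Complex.exp ((c : ℂ) * x) := hr.mul hec
  have hnormexp : ∀ t : ℝ, ‖Complex.exp ((t : ℂ))‖ = Real.exp t := by
    intro t; simp [Complex.norm_exp]
  rw [Metric.tendsto_nhds]
  intro ε hε
  have hε' : 0 < ε * c / 3 := by positivity
  obtain ⟨T, hT⟩ := eventually_atTop.mp
    ((Metric.tendsto_nhds.mp hL _ hε').and (eventually_ge_atTop y₀))
  have hy₀T : y₀ ≤ T := (hT T le_rfl).2
  set C : ℂ := ∫ x in y₀..T, r x * Complex.exp ((c : ℂ) * x) with hCdef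
  have hexp0 : Tendsto (fun y : ℝ => Real.exp (-(c * y))) atTop (nhds 0) :=
    Real.tendsto_exp_atBot.comp
      (tendsto_neg_atBot_iff.mpr ((tendsto_const_mul_atTop_of_pos hc).mpr tendsto_id))
  have ev1 : ∀ᶠ y : ℝ in atTop, Real.exp (-(c * y)) * ‖C‖ < ε / 3 := by
    have h0 := hexp0.mul_const ‖C‖
    rw [zero_mul] at h0
    exact h0.eventually_lt_const (by linarith)
  have ev3 : ∀ᶠ y : ℝ in atTop, ‖L‖ / c * Real.exp (c * (T - y)) < ε / 3 := by
    have h2 : Tendsto (fun y : ℝ => ‖L‖ / c * Real.exp (c * (T - y))) atTop (nhds 0) := by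
      have h0 := (hexp0.const_mul (Real.exp (c * T))).const_mul (‖L‖ / c)
      rw [mul_zero, mul_zero] at h0
      refine h0.congr fun y => ?_
      rw [show c * (T - y) = c * T + -(c * y) by ring, Real.exp_add]
    exact h2.eventually_lt_const (by linarith)
  filter_upwards [eventually_ge_atTop T, ev1, ev3] with y hyT h1 h3
  have hsplit : (∫ x in y₀..y, r x * Complex.exp ((c : ℂ) * x)) =
      C + ∫ x in T..y, r x * Complex.exp ((c : ℂ) * x) :=
    (integral_add_adjacent_intervals (hFc.intervalIntegrable y₀ T) (hFc.intervalIntegrable T y)).symm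
  have hTy : (∫ x in T..y, r x * Complex.exp ((c : ℂ) * x)) =
      (∫ x in T..y, (r x - L) * Complex.exp ((c : ℂ) * x)) +
        L * ((Complex.exp ((c : ℂ) * y) - Complex.exp ((c : ℂ) * T)) / c) := by
    rw [← integral_exp_mul_complex hcC, ← intervalIntegral.integral_const_mul,
      ← intervalIntegral.integral_add (f := fun x => (r x - L) * Complex.exp ((c : ℂ) * x))
          (g := fun x => L * Complex.exp ((c : ℂ) * x)) (((hr.sub continuous_const).mul hec).intervalIntegrable T y)
        ((continuous_const.mul hec).intervalIntegrable T y)]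
    apply intervalIntegral.integral_congr
    intro x _; ring
  have e1 : Complex.exp (-(c : ℂ) * y) * Complex.exp ((c : ℂ) * y) = 1 := by
    rw [← Complex.exp_add]; ring_nf; exact Complex.exp_zero
  have e2 : Complex.exp (-(c : ℂ) * y) * Complex.exp ((c : ℂ) * T) =
      Complex.exp ((c : ℂ) * (T - y)) := by
    rw [← Complex.exp_add]; ring_nf
  have key_eq : Complex.exp (-(c : ℂ) * y) * (∫ x in y₀..y, r x * Complex.exp ((c : ℂ) * x)) - L / c =
      Complex.exp (-(c : ℂ) * y) * C +
        Complex.exp (-(c : ℂ) * y) * (∫ x in T..y, (r x - L) * Complex.exp ((c : ℂ) * x)) -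
        L / c * Complex.exp ((c : ℂ) * (T - y)) := by
    rw [hsplit, hTy]
    linear_combination (L / (c : ℂ)) * e1 - (L / (c : ℂ)) * e2
  rw [dist_eq_norm, key_eq]
  have nexp : ∀ t : ℝ, ‖Complex.exp (-(c : ℂ) * t)‖ = Real.exp (-(c * t)) := by
    intro t
    rw [show (-(c : ℂ) * (t : ℂ)) = ((-(c * t) : ℝ) : ℂ) by push_cast; ring, hnormexp]
  have hD : ‖∫ x in T..y, (r x - L) * Complex.exp ((c : ℂ) * x)‖ ≤
      ε * c / 3 * ((Real.exp (c * y) - Real.exp (c * T)) / c) := by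
    calc ‖∫ x in T..y, (r x - L) * Complex.exp ((c : ℂ) * x)‖
        ≤ ∫ x in T..y, ‖(r x - L) * Complex.exp ((c : ℂ) * x)‖ :=
          intervalIntegral.norm_integral_le_integral_norm hyT
      _ ≤ ∫ x in T..y, ε * c / 3 * Real.exp (c * x) := by
          apply intervalIntegral.integral_mono_on hyT
          · exact (((hr.sub continuous_const).mul hec).norm).intervalIntegrable T y
          · exact (continuous_const.mul
              (Real.continuous_exp.comp (continuous_const.mul continuous_id))).intervalIntegrable T y
          · intro x hx
            rw [norm_mul, show ((c : ℂ) * (x : ℂ)) = ((c * x : ℝ) : ℂ) by push_cast; ring, hnormexp]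
            have hdx := (hT x hx.1).1
            rw [dist_eq_norm] at hdx
            exact mul_le_mul_of_nonneg_right hdx.le (Real.exp_pos _).le
      _ = ε * c / 3 * ((Real.exp (c * y) - Real.exp (c * T)) / c) := by
          rw [intervalIntegral.integral_const_mul, integral_exp_mul_real' hc.ne']
  have hid : Real.exp (-(c * y)) * Real.exp (c * y) = 1 := by rw [← Real.exp_add]; simp
  have hB : ‖Complex.exp (-(c : ℂ) * y) * (∫ x in T..y, (r x - L) * Complex.exp ((c : ℂ) * x))‖
      ≤ ε / 3 := by
    rw [norm_mul, nexp]
    calc Real.exp (-(c * y)) * ‖∫ x in T..y, (r x - L) * Complex.exp ((c : ℂ) * x)‖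
        ≤ Real.exp (-(c * y)) * (ε * c / 3 * ((Real.exp (c * y) - Real.exp (c * T)) / c)) :=
          mul_le_mul_of_nonneg_left hD (Real.exp_pos _).le
      _ = ε / 3 * (Real.exp (-(c * y)) * (Real.exp (c * y) - Real.exp (c * T))) := by
          field_simp
      _ ≤ ε / 3 * 1 := by
          refine mul_le_mul_of_nonneg_left ?_ (by positivity)
          nlinarith [mul_pos (Real.exp_pos (-(c * y))) (Real.exp_pos (c * T))]
      _ = ε / 3 := mul_one _
  have hA : ‖Complex.exp (-(c : ℂ) * y) * C‖ = Real.exp (-(c * y)) * ‖C‖ := by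
    rw [norm_mul, nexp]
  have hCt : ‖L / c * Complex.exp ((c : ℂ) * (T - y))‖ = ‖L‖ / c * Real.exp (c * (T - y)) := by
    rw [norm_mul, norm_div, show ((c : ℂ) * ((T : ℂ) - (y : ℂ))) = ((c * (T - y) : ℝ) : ℂ) by
      push_cast; ring, hnormexp]
    simp [Complex.norm_real, Real.norm_eq_abs, abs_of_pos hc]
  calc ‖Complex.exp (-(c : ℂ) * y) * C +
        Complex.exp (-(c : ℂ) * y) * (∫ x in T..y, (r x - L) * Complex.exp ((c : ℂ) * x)) -
        L / c * Complex.exp ((c : ℂ) * (T - y))‖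
      ≤ ‖Complex.exp (-(c : ℂ) * y) * C‖ +
        ‖Complex.exp (-(c : ℂ) * y) * (∫ x in T..y, (r x - L) * Complex.exp ((c : ℂ) * x))‖ +
        ‖L / c * Complex.exp ((c : ℂ) * (T - y))‖ :=
      (norm_sub_le _ _).trans (add_le_add (norm_add_le _ _) le_rfl)
    _ < ε := by rw [hA, hCt]; linarith


/-- Reduction of order: from a nonvanishing decaying solution `ψ` of `ψ'' = qψ` with
`ψ(y)e^{αy} → 1`, the function `φ(y) = ψ(y) ∫_{y₀}^{y} ψ(x)⁻² dx` is a second solution with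
Wronskian `φ'ψ − φψ' = 1`, and `φ(y) e^{−αy} → 1/(2α)` (so `|φ| → ∞`, `φ ∼ e^{+αy}`). -/
theorem growing_solution_reduction_of_order (α a : ℝ) (hα : 0 < α)
    (q : ℝ → ℂ) (hq : ContinuousOn q (Ici a))
    (ψ ψd ψdd : ℝ → ℂ)
    (hψd : ∀ y ∈ Ici a, HasDerivWithinAt ψ (ψd y) (Ici a) y)
    (hψdd : ∀ y ∈ Ici a, HasDerivWithinAt ψd (ψdd y) (Ici a) y)
    (heq : ∀ y ∈ Ici a, ψdd y = q y * ψ y)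
    (hne : ∀ y ∈ Ici a, ψ y ≠ 0)
    (hdecay : Tendsto (fun y : ℝ => ψ y * Complex.exp ((α : ℂ) * (y : ℂ))) atTop (nhds 1))
    (y₀ : ℝ) (hy₀ : a ≤ y₀) :
    ∃ φd φdd : ℝ → ℂ,
      (∀ y ∈ Ici a,
        HasDerivWithinAt (fun y : ℝ => ψ y * ∫ x in y₀..y, ((ψ x) ^ 2)⁻¹) (φd y) (Ici a) y) ∧
      (∀ y ∈ Ici a, HasDerivWithinAt φd (φdd y) (Ici a) y) ∧
      (∀ y ∈ Ici a, φdd y = q y * (ψ y * ∫ x in y₀..y, ((ψ x) ^ 2)⁻¹)) ∧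
      (∀ y ∈ Ici a,
        φd y * ψ y - (ψ y * ∫ x in y₀..y, ((ψ x) ^ 2)⁻¹) * ψd y = 1) ∧
      Tendsto
        (fun y : ℝ => (ψ y * ∫ x in y₀..y, ((ψ x) ^ 2)⁻¹) * Complex.exp (-(α : ℂ) * (y : ℂ)))
        atTop (nhds (1 / (2 * (α : ℂ)))) := by
  have hψc : ContinuousOn ψ (Ici a) := fun y hy => (hψd y hy).continuousWithinAt
  -- global continuous extension of the integrand
  set G : ℝ → ℂ := fun x => ((ψ (max x a)) ^ 2)⁻¹ with hGdef
  have hgc : ContinuousOn (fun x => ((ψ x) ^ 2)⁻¹) (Ici a) :=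
    ((hψc.pow 2).inv₀ fun y hy => pow_ne_zero 2 (hne y hy))
  have hGc : Continuous G :=
    hgc.comp_continuous (continuous_id.max continuous_const) fun x => le_max_right x a
  have hGg : ∀ x ∈ Ici a, G x = ((ψ x) ^ 2)⁻¹ := by
    intro x hx; simp only [hGdef, max_eq_left (mem_Ici.mp hx)]
  have hJeq : ∀ y ∈ Ici a, (∫ x in y₀..y, ((ψ x) ^ 2)⁻¹) = ∫ x in y₀..y, G x := by
    intro y hy
    refine intervalIntegral.integral_congr fun x hx => (hGg x ?_).symm
    exact le_trans (le_min hy₀ hy) hx.1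
  have hJG : ∀ y : ℝ, HasDerivAt (fun t => ∫ x in y₀..t, G x) (G y) y := fun y =>
    (hGc.integral_hasStrictDerivAt y₀ y).hasDerivAt
  have hJ : ∀ y ∈ Ici a,
      HasDerivWithinAt (fun t => ∫ x in y₀..t, ((ψ x) ^ 2)⁻¹) (((ψ y) ^ 2)⁻¹) (Ici a) y := by
    intro y hy
    have h := (hJG y).hasDerivWithinAt (s := Ici a)
    rw [hGg y hy] at h
    exact h.congr (fun z hz => hJeq z hz) (hJeq y hy)
  refine ⟨fun y => ψd y * (∫ x in y₀..y, ((ψ x) ^ 2)⁻¹) + ψ y * ((ψ y) ^ 2)⁻¹,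
    fun y => q y * (ψ y * ∫ x in y₀..y, ((ψ x) ^ 2)⁻¹), ?_, ?_, ?_, ?_, ?_⟩
  · intro y hy
    exact (hψd y hy).mul (hJ y hy)
  · intro y hy
    have hinv : HasDerivWithinAt (fun z => (ψ z)⁻¹) (-(ψ y ^ 2)⁻¹ * ψd y) (Ici a) y :=
      (hasDerivAt_inv (hne y hy)).comp_hasDerivWithinAt y (hψd y hy)
    have h := ((hψdd y hy).mul (hJ y hy)).add hinv
    have h2 : HasDerivWithinAt
        (fun z => ψd z * (∫ x in y₀..z, ((ψ x) ^ 2)⁻¹) + ψ z * ((ψ z) ^ 2)⁻¹)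
        (ψdd y * (∫ x in y₀..y, ((ψ x) ^ 2)⁻¹) + ψd y * ((ψ y) ^ 2)⁻¹ +
          -(ψ y ^ 2)⁻¹ * ψd y) (Ici a) y := by
      refine h.congr (fun z hz => ?_) ?_
      · have hz' := hne z hz
        simp only [Pi.add_apply, Pi.mul_apply]
        field_simp
      · have hy' := hne y hy
        simp only [Pi.add_apply, Pi.mul_apply]
        field_simp
    have hval : ψdd y * (∫ x in y₀..y, ((ψ x) ^ 2)⁻¹) + ψd y * ((ψ y) ^ 2)⁻¹ + -(ψ y ^ 2)⁻¹ * ψd y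
        = q y * (ψ y * ∫ x in y₀..y, ((ψ x) ^ 2)⁻¹) := by
      rw [heq y hy]
      have := hne y hy
      field_simp
      ring
    rwa [hval] at h2
  · intro y hy; rfl
  · intro y hy
    have := hne y hy
    field_simp
    ring
  · -- the limit
    set c : ℝ := 2 * α with hcdef
    have hc : 0 < c := by positivity
    set r : ℝ → ℂ := fun x => G x * Complex.exp (-(c : ℂ) * x) with hrdef
    have hrc : Continuous r := hGc.mul (Complex.continuous_exp.comp (by continuity))
    have hry : ∀ y : ℝ, a ≤ y → ((ψ y * Complex.exp ((α : ℂ) * y)) ^ 2)⁻¹ = r y := by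
      intro y hy
      have hr1 : r y = (ψ y ^ 2)⁻¹ * Complex.exp (-(c : ℂ) * y) := by
        rw [hrdef]; simp only; rw [hGg y hy]
      rw [hr1, mul_pow, mul_inv]
      congr 1
      rw [← Complex.exp_nat_mul, ← Complex.exp_neg]
      congr 1
      rw [hcdef]; push_cast; ring
    have hrL : Tendsto r atTop (nhds 1) := by
      have h1 : Tendsto (fun y : ℝ => (ψ y * Complex.exp ((α : ℂ) * y)) ^ 2) atTop (nhds 1) := by
        simpa using hdecay.pow 2
      have h2 := h1.inv₀ one_ne_zero
      rw [inv_one] at h2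
      refine h2.congr' ?_
      filter_upwards [eventually_ge_atTop a] with y hy
      exact hry y hy
    have hkey := key_limit' hc y₀ hrc hrL
    have hrint : ∀ x : ℝ, r x * Complex.exp ((c : ℂ) * x) = G x := by
      intro x
      rw [hrdef]; simp only
      rw [mul_assoc, ← Complex.exp_add]
      simp
    have hmain := hdecay.mul hkey
    have hval : (1 : ℂ) * (1 / (c : ℝ)) = 1 / (2 * (α : ℂ)) := by
      rw [hcdef]; push_cast; ring
    rw [← hval]
    refine hmain.congr' ?_
    filter_upwards [eventually_ge_atTop a] with y hy
    have hint : (∫ x in y₀..y, r x * Complex.exp ((c : ℂ) * x)) =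
        ∫ x in y₀..y, ((ψ x) ^ 2)⁻¹ := by
      rw [hJeq y hy]
      exact intervalIntegral.integral_congr fun x _ => hrint x
    have hexpeq : Complex.exp ((α : ℂ) * y) * Complex.exp (-(c : ℂ) * y) =
        Complex.exp (-(α : ℂ) * y) := by
      rw [← Complex.exp_add]
      congr 1
      rw [hcdef]; push_cast; ring
    rw [hint]
    linear_combination (ψ y * ∫ x in y₀..y, ((ψ x) ^ 2)⁻¹) * hexpeq
end
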